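/- Let n ≥ 2, let λ₁, …, λₙ be nonnegative reals, set S = Σ_{k=1}^{n} λₖ, fix an index i ∈ {1, …, n}, and let (x_j)_{j≠i} be arbitrary reals. Then Σ_{j≠i} [−2S(2S − λᵢ − λⱼ) + 2(λⱼ − λᵢ)²]·xⱼ² + Σ_{j≠l, j,l≠i} [S(λⱼ + λₗ − S − λᵢ) + 2(λⱼ − λᵢ)(λₗ − λᵢ)]·xⱼxₗ ≤ 0. -/

import Mathlib

/-- With `λ₁, …, λₙ ≥ 0` (`n ≥ 2`), `S = Σ λₖ`, a fixed index `i` and arbitrary reals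
`(xⱼ)_{j≠i}`:
`Σ_{j≠i} [−2S(2S−λᵢ−λⱼ) + 2(λⱼ−λᵢ)²] xⱼ²
 + Σ_{j≠l, j,l≠i} [S(λⱼ+λₗ−S−λᵢ) + 2(λⱼ−λᵢ)(λₗ−λᵢ)] xⱼxₗ ≤ 0`. -/
theorem stmt_9 (n : ℕ) (hn : 2 ≤ n) (lam : Fin n → ℝ) (hlam : ∀ k, 0 ≤ lam k)
    (S : ℝ) (hS : S = ∑ k, lam k) (i : Fin n) (x : Fin n → ℝ) :
    (∑ j ∈ Finset.univ \ {i},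
        (-2 * S * (2 * S - lam i - lam j) + 2 * (lam j - lam i) ^ 2) * (x j) ^ 2)
      + (∑ j ∈ Finset.univ \ {i}, ∑ l ∈ Finset.univ \ {i, j},
          (S * (lam j + lam l - S - lam i) + 2 * (lam j - lam i) * (lam l - lam i))
            * (x j * x l)) ≤ 0 := by
  classical
  set T : Finset (Fin n) := Finset.univ \ {i} with hT
  set a : ℝ := lam i with ha
  set u : ℝ := ∑ j ∈ T, x j with hu
  set v : ℝ := ∑ j ∈ T, lam j * x j with hv
  set P : ℝ := ∑ j ∈ T, (x j) ^ 2 with hP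
  have hSum : ∑ j ∈ T, lam j = S - a := by
    have : (∑ j ∈ T, lam j) + lam i = ∑ k, lam k := by
      rw [hT]
      rw [Finset.sum_sdiff_eq_sub (Finset.subset_univ _)]
      simp
    rw [hS]; linarith [this]
  have hset : ∀ j ∈ T, Finset.univ \ {i, j} = T.erase j := by
    intro j hj
    ext l
    simp only [Finset.mem_sdiff, Finset.mem_univ, Finset.mem_insert, Finset.mem_singleton,
      Finset.mem_erase, hT, true_and]
    tauto
  have hw : ∑ j ∈ T, (lam j - a) * x j = v - a * u := by
    rw [hv, hu, Finset.mul_sum, ← Finset.sum_sub_distrib]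
    apply Finset.sum_congr rfl
    intro j _; ring
  -- Step 1: rewrite LHS as a single sum over T with inner sums evaluated.
  have step1 : (∑ j ∈ T,
        (-2 * S * (2 * S - lam i - lam j) + 2 * (lam j - lam i) ^ 2) * (x j) ^ 2)
      + (∑ j ∈ T, ∑ l ∈ Finset.univ \ {i, j},
          (S * (lam j + lam l - S - lam i) + 2 * (lam j - lam i) * (lam l - lam i))
            * (x j * x l))
      = ∑ j ∈ T, (-3 * S * (S - a) * (x j) ^ 2
          + x j * (S * (lam j - S - a) * u + S * v + 2 * (lam j - a) * (v - a * u))) := by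
    rw [← Finset.sum_add_distrib]
    apply Finset.sum_congr rfl
    intro j hj
    rw [hset j hj, Finset.sum_erase_eq_sub hj]
    have hinner : ∑ l ∈ T,
        (S * (lam j + lam l - S - lam i) + 2 * (lam j - lam i) * (lam l - lam i))
          * (x j * x l)
        = x j * ((S * (lam j - S - a)) * u + S * v + (2 * (lam j - a)) * (v - a * u)) := by
      calc ∑ l ∈ T,
          (S * (lam j + lam l - S - lam i) + 2 * (lam j - lam i) * (lam l - lam i))
            * (x j * x l)
          = ∑ l ∈ T, ((x j * (S * (lam j - S - a))) * x l
              + (x j * S) * (lam l * x l)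
              + (x j * (2 * (lam j - a))) * ((lam l - a) * x l)) :=
            Finset.sum_congr rfl fun l _ => by rw [ha]; ring
        _ = (x j * (S * (lam j - S - a))) * (∑ l ∈ T, x l)
              + (x j * S) * (∑ l ∈ T, lam l * x l)
              + (x j * (2 * (lam j - a))) * (∑ l ∈ T, (lam l - a) * x l) := by
            rw [Finset.sum_add_distrib, Finset.sum_add_distrib,
              ← Finset.mul_sum, ← Finset.mul_sum, ← Finset.mul_sum]
        _ = x j * ((S * (lam j - S - a)) * u + S * v + (2 * (lam j - a)) * (v - a * u)) := by
            rw [hw, ← hu, ← hv]; ring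
    rw [hinner, ha]
    ring
  rw [show (Finset.univ \ {i} : Finset (Fin n)) = T from rfl] at *
  rw [step1]
  -- Step 2: evaluate the single sum in closed form.
  have step2 : ∑ j ∈ T, (-3 * S * (S - a) * (x j) ^ 2
          + x j * (S * (lam j - S - a) * u + S * v + 2 * (lam j - a) * (v - a * u)))
      = -3 * S * (S - a) * P + (S * u) * v + (S * v - S * (S + a) * u) * u
        + (2 * (v - a * u)) * (v - a * u) := by
    have e : ∀ j, -3 * S * (S - a) * (x j) ^ 2
          + x j * (S * (lam j - S - a) * u + S * v + 2 * (lam j - a) * (v - a * u))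
        = (-3 * S * (S - a)) * (x j) ^ 2 + (S * u) * (lam j * x j)
          + (S * v - S * (S + a) * u) * x j + (2 * (v - a * u)) * ((lam j - a) * x j) := by
      intro j; ring
    simp_rw [e]
    rw [Finset.sum_add_distrib, Finset.sum_add_distrib, Finset.sum_add_distrib,
      ← Finset.mul_sum, ← Finset.mul_sum, ← Finset.mul_sum, ← Finset.mul_sum,
      hw, ← hu, ← hv, ← hP]
  rw [step2]
  -- Final inequality via Cauchy–Schwarz and nlinarith.
  have hP0 : 0 ≤ P := Finset.sum_nonneg fun j _ => sq_nonneg _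
  have hS'0 : 0 ≤ S - a := hSum ▸ Finset.sum_nonneg fun j _ => hlam j
  have ha0 : 0 ≤ a := hlam i
  have cauchy : v ^ 2 ≤ (S - a) ^ 2 * P := by
    have c1 : v ^ 2 ≤ (∑ j ∈ T, (lam j) ^ 2) * P :=
      Finset.sum_mul_sq_le_sq_mul_sq T lam x
    have c2 : (∑ j ∈ T, (lam j) ^ 2) ≤ (S - a) ^ 2 := by
      rw [← hSum]
      exact Finset.sum_sq_le_sq_sum_of_nonneg fun j _ => hlam j
    exact c1.trans (mul_le_mul_of_nonneg_right c2 hP0)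
  rcases hS'0.eq_or_lt.imp Eq.symm id with h0 | h0
  · have hz : (S - a) ^ 2 * P = 0 := by rw [h0]; ring
    have hv0 : v = 0 := by nlinarith [sq_nonneg v]
    have haS : S = a := by linarith
    rw [hv0, haS]
    ring_nf
    nlinarith [sq_nonneg u]
  · nlinarith [sq_nonneg (v - (S - a) * u), sq_nonneg (v + (S - a) * u),
      mul_nonneg (by linarith : (0:ℝ) ≤ S) (sq_nonneg (v - (S - a) * u)),
      mul_nonneg ha0 (sq_nonneg (v + (S - a) * u)),
      mul_nonneg (by linarith : (0:ℝ) ≤ S) (by linarith : (0:ℝ) ≤ (S - a) ^ 2 * P - v ^ 2)]
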